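/- Let m ≥ r ≥ 1 and let α = (α_k)_{k=1}^r be a symmetric integer weight vector such that C(m−k, r−k) divides α_k for each 1 ≤ k ≤ r, with all β_k := α_k / C(m−k, r−k) ≥ 1. Then, for every graphon W, t_{𝓖_α}(W_α) = t_J^β(W), where J is the (r,r)-downset graph and β = (β_k)_{k=1}^r. -/

import Mathlib

open MeasureTheory

def unitBox (ι : Type*) : Set (ι → ℝ) := Set.univ.pi fun _ => Set.Icc (0 : ℝ) 1

/-- The vertex class `V_k` (for `1 ≤ k ≤ r`) of the hypergraph `𝓗_α`: one vertex for
each triple of an `r`-subset `F ⊆ [m]`, a `k`-subset of `F`, and a copy index in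
`Fin (β_k)`. -/
abbrev PartVert (m r k : ℕ) : Type :=
  {q : Finset (Fin m) × Finset (Fin m) // q.1.card = r ∧ q.2 ⊆ q.1 ∧ q.2.card = k}

/-- The vertex set `V_1 ∪ ⋯ ∪ V_r` of `𝓗_α` (the part `V_0 = [m]` is kept separate). -/
abbrev HVert (m r : ℕ) (β : ℕ → ℕ) : Type :=
  Σ k : Fin r, PartVert m r ((k : ℕ) + 1) × Fin (β ((k : ℕ) + 1))

/-- The edges of `𝓗_α`: a vertex `v₀ ∈ [m]`, an `r`-set `F`, a chain
`C_1 ⊆ ⋯ ⊆ C_r ⊆ F` with `|C_k| = k` and `v₀ ∈ C_k`, together with copy indices. -/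
abbrev HEdge (m r : ℕ) (β : ℕ → ℕ) : Type :=
  {c : Fin m × Finset (Fin m) × (Fin r → Finset (Fin m)) //
      c.2.1.card = r ∧
      (∀ k : Fin r, (c.2.2 k).card = (k : ℕ) + 1 ∧ c.2.2 k ⊆ c.2.1) ∧
      (∀ k l : Fin r, k ≤ l → c.2.2 k ⊆ c.2.2 l) ∧
      (∀ k : Fin r, c.1 ∈ c.2.2 k)} ×
    (∀ k : Fin r, Fin (β ((k : ℕ) + 1)))

/-- The vertex of `V_k` appearing in position `k` of an edge of `𝓗_α`. -/
def HEdge.vert {m r : ℕ} {β : ℕ → ℕ} (e : HEdge m r β) (k : Fin r) : HVert m r β :=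
  ⟨k, ⟨⟨(e.1.1.2.1, e.1.1.2.2 k), e.1.2.1, (e.1.2.2.1 k).2, (e.1.2.2.1 k).1⟩, e.2 k⟩⟩

/-- Homomorphism density of the `(r+1)`-partite `(r+1)`-graph `𝓗_α` in a function
`U : [0,1]^{r+1} → [0,1]` (curried as `U(x, z_1, …, z_r)`). -/
noncomputable def tHyp (m r : ℕ) (β : ℕ → ℕ) (U : ℝ → (Fin r → ℝ) → ℝ) : ℝ :=
  ∫ x in unitBox (Fin m), ∫ z in unitBox (HVert m r β),
    ∏ e : HEdge m r β, U (x e.1.1.1) fun k => z (e.vert k)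

/-- The vertex set `U_1([r]) ∪ ⋯ ∪ U_r([r])` of `𝓖_α`. -/
abbrev GVert (r : ℕ) (β : ℕ → ℕ) : Type :=
  Σ k : Fin r, {s : Finset (Fin r) // s.card = (k : ℕ) + 1} × Fin (β ((k : ℕ) + 1))

/-- The edges of `𝓖_α`: the `[r]`-chains, i.e. a vertex `v₀ ∈ [r]` and a chain
`C_1 ⊆ ⋯ ⊆ C_r ⊆ [r]` with `|C_k| = k` and `v₀ ∈ C_k`, with copy indices. -/
abbrev GEdge (r : ℕ) (β : ℕ → ℕ) : Type :=
  {c : Fin r × (Fin r → Finset (Fin r)) //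
      (∀ k : Fin r, (c.2 k).card = (k : ℕ) + 1) ∧
      (∀ k l : Fin r, k ≤ l → c.2 k ⊆ c.2 l) ∧
      (∀ k : Fin r, c.1 ∈ c.2 k)} ×
    (∀ k : Fin r, Fin (β ((k : ℕ) + 1)))

/-- The vertex of `U_k([r])` appearing in position `k` of an edge of `𝓖_α`. -/
def GEdge.vert {r : ℕ} {β : ℕ → ℕ} (e : GEdge r β) (k : Fin r) : GVert r β :=
  ⟨k, ⟨⟨e.1.1.2 k, e.1.2.1 k⟩, e.2 k⟩⟩

/-- Homomorphism density of the `(r+1)`-partite `(r+1)`-graph `𝓖_α` in a function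
`U : [0,1]^{r+1} → [0,1]` (curried as `U(x, z_1, …, z_r)`). -/
noncomputable def tGyp (r : ℕ) (β : ℕ → ℕ) (U : ℝ → (Fin r → ℝ) → ℝ) : ℝ :=
  ∫ x in unitBox (Fin r), ∫ z in unitBox (GVert r β),
    ∏ e : GEdge r β, U (x e.1.1.1) fun k => z (e.vert k)

/-- The exponent `q_k = β_k / (β·(k-1)!·(r-k)!)`, where `β = β_1⋯β_r`. -/
noncomputable def qexp (r : ℕ) (β : ℕ → ℕ) (k : ℕ) : ℝ :=
  (β k : ℝ) /
    ((∏ i ∈ Finset.Icc 1 r, (β i : ℝ)) * (k - 1).factorial * (r - k).factorial)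

/-- The function `W_α(x, z_1, …, z_r) = ∏_{k=1}^r W(x, z_k)^{q_k}` (real powers). -/
noncomputable def Walpha (r : ℕ) (β : ℕ → ℕ) (W : ℝ → ℝ → ℝ)
    (x : ℝ) (z : Fin r → ℝ) : ℝ :=
  ∏ k : Fin r, W x (z k) ^ qexp r β ((k : ℕ) + 1)


/-- `ρ(x_F) = ∫_0^1 ∏_{i ∈ F} W(x_i, y) dy`. -/
noncomputable def rho {A : Type*} (W : ℝ → ℝ → ℝ) (x : A → ℝ) (F : Finset A) : ℝ :=
  ∫ y in Set.Icc (0 : ℝ) 1, ∏ i ∈ F, W (x i) y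

/-- The `α`-weighted homomorphism density of the `(m,r)`-downset graph. -/
noncomputable def downsetDensity (m r : ℕ) (α : ℕ → ℕ) (W : ℝ → ℝ → ℝ) : ℝ :=
  ∫ x in unitBox (Fin m),
    ∏ F ∈ Finset.univ.filter (fun F : Finset (Fin m) => 1 ≤ F.card ∧ F.card ≤ r),
      rho W x F ^ α F.card

section AuxProof

variable {r : ℕ} {β : ℕ → ℕ}

def gphi (p : GEdge r β × Fin r) : GVert r β × Fin r := (p.1.vert p.2, p.1.1.1.1)

noncomputable def gN (w : GVert r β × Fin r) : ℕ :=
  (Finset.univ.filter fun p : GEdge r β × Fin r => gphi p = w).card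

def gRel (π : Equiv.Perm (Fin r)) (τ : ∀ k : Fin r, Equiv.Perm (Fin (β ((k : ℕ) + 1))))
    (e : GEdge r β) : GEdge r β :=
  (⟨(π e.1.1.1, fun l => (e.1.1.2 l).image π),
    fun l => by rw [Finset.card_image_of_injective _ π.injective]; exact e.1.2.1 l,
    fun k l h => Finset.image_subset_image (e.1.2.2.1 k l h),
    fun l => Finset.mem_image_of_mem π (e.1.2.2.2 l)⟩,
   fun l => τ l (e.2 l))

def gAct (π : Equiv.Perm (Fin r)) (τ : ∀ k : Fin r, Equiv.Perm (Fin (β ((k : ℕ) + 1))))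
    (w : GVert r β × Fin r) : GVert r β × Fin r :=
  (⟨w.1.1, (⟨(w.1.2.1.1).image π,
      by rw [Finset.card_image_of_injective _ π.injective]; exact w.1.2.1.2⟩,
    τ w.1.1 w.1.2.2)⟩, π w.2)

lemma gvert_ext {k : Fin r} {s s' : Finset (Fin r)} {hs : s.card = (k : ℕ) + 1}
    {hs' : s'.card = (k : ℕ) + 1} {j j' : Fin (β ((k : ℕ) + 1))}
    (h1 : s = s') (h2 : j = j') :
    (⟨k, (⟨s, hs⟩, j)⟩ : GVert r β) = ⟨k, (⟨s', hs'⟩, j')⟩ := by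
  subst h1; subst h2; rfl

lemma gRel_gRel (π : Equiv.Perm (Fin r)) (τ : ∀ k : Fin r, Equiv.Perm (Fin (β ((k : ℕ) + 1))))
    (e : GEdge r β) : gRel π.symm (fun l => (τ l).symm) (gRel π τ e) = e := by
  obtain ⟨⟨⟨v0, c⟩, hc⟩, f⟩ := e
  simp only [gRel, Prod.mk.injEq, Subtype.mk.injEq]
  refine ⟨⟨π.symm_apply_apply v0, ?_⟩, ?_⟩
  · funext l
    rw [Finset.image_image]
    simp [Function.comp_def]
  · funext l
    exact (τ l).symm_apply_apply (f l)

lemma gAct_gAct (π : Equiv.Perm (Fin r)) (τ : ∀ k : Fin r, Equiv.Perm (Fin (β ((k : ℕ) + 1))))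
    (w : GVert r β × Fin r) : gAct π.symm (fun l => (τ l).symm) (gAct π τ w) = w := by
  obtain ⟨⟨k, ⟨⟨s, hs⟩, j⟩⟩, i⟩ := w
  simp only [gAct]
  refine Prod.ext ?_ (π.symm_apply_apply i)
  refine gvert_ext ?_ ((τ k).symm_apply_apply j)
  rw [Finset.image_image]
  simp [Function.comp_def]

lemma gphi_gRel (π : Equiv.Perm (Fin r)) (τ : ∀ k : Fin r, Equiv.Perm (Fin (β ((k : ℕ) + 1))))
    (e : GEdge r β) (k : Fin r) : gphi (gRel π τ e, k) = gAct π τ (gphi (e, k)) := rfl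

lemma gRel_gRel' (π : Equiv.Perm (Fin r)) (τ : ∀ k : Fin r, Equiv.Perm (Fin (β ((k : ℕ) + 1))))
    (e : GEdge r β) : gRel π τ (gRel π.symm (fun l => (τ l).symm) e) = e := by
  have := gRel_gRel π.symm (fun l => (τ l).symm) e
  simpa using this

lemma gN_act (π : Equiv.Perm (Fin r)) (τ : ∀ k : Fin r, Equiv.Perm (Fin (β ((k : ℕ) + 1))))
    (w : GVert r β × Fin r) : gN (gAct π τ w) = gN w := by
  classical
  unfold gN
  refine Finset.card_bij' (fun p _ => (gRel π.symm (fun l => (τ l).symm) p.1, p.2))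
    (fun p _ => (gRel π τ p.1, p.2)) ?_ ?_ ?_ ?_
  · intro p hp
    rw [Finset.mem_filter] at hp ⊢
    refine ⟨Finset.mem_univ _, ?_⟩
    show gphi (gRel π.symm (fun l => (τ l).symm) p.1, p.2) = w
    rw [gphi_gRel, Prod.mk.eta, hp.2, gAct_gAct]
  · intro p hp
    rw [Finset.mem_filter] at hp ⊢
    refine ⟨Finset.mem_univ _, ?_⟩
    show gphi (gRel π τ p.1, p.2) = gAct π τ w
    rw [gphi_gRel, Prod.mk.eta, hp.2]
  · intro p _
    show (gRel π τ (gRel π.symm (fun l => (τ l).symm) p.1), p.2) = p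
    rw [gRel_gRel']
  · intro p _
    show (gRel π.symm (fun l => (τ l).symm) (gRel π τ p.1), p.2) = p
    rw [gRel_gRel]

theorem permExists (s s' : Finset (Fin r)) (hcard : s.card = s'.card)
    (i i' : Fin r) (hi : i ∈ s) (hi' : i' ∈ s') :
    ∃ π : Equiv.Perm (Fin r), π i = i' ∧ s.image π = s' := by
  classical
  have hc1 : Fintype.card ↥(↑s : Set (Fin r)) = Fintype.card ↥(↑s' : Set (Fin r)) := by
    simp [hcard]
  have hc2 : Fintype.card ↥(↑s : Set (Fin r))ᶜ = Fintype.card ↥(↑s' : Set (Fin r))ᶜ := by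
    rw [Fintype.card_compl_set, Fintype.card_compl_set, hc1]
  obtain ⟨e0⟩ := Fintype.card_eq.1 hc1
  obtain ⟨e2⟩ := Fintype.card_eq.1 hc2
  set e1 : ↥(↑s : Set (Fin r)) ≃ ↥(↑s' : Set (Fin r)) :=
    e0.trans (Equiv.swap (e0 ⟨i, hi⟩) ⟨i', hi'⟩) with he1
  have he1i : e1 ⟨i, hi⟩ = ⟨i', hi'⟩ := by
    simp [he1, Equiv.swap_apply_left]
  set π : Equiv.Perm (Fin r) :=
    ((Equiv.Set.sumCompl (↑s : Set (Fin r))).symm.trans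
      ((e1.sumCongr e2).trans (Equiv.Set.sumCompl (↑s' : Set (Fin r))))) with hπ
  have hmem : ∀ a (ha : a ∈ s), π a = (e1 ⟨a, ha⟩ : Fin r) := by
    intro a ha
    simp only [hπ, Equiv.trans_apply]
    rw [Equiv.Set.sumCompl_symm_apply_of_mem (show a ∈ (↑s : Set (Fin r)) from ha)]
    rfl
  refine ⟨π, by rw [hmem i hi, he1i], ?_⟩
  apply Finset.eq_of_subset_of_card_le
  · intro b hb
    obtain ⟨a, ha, rfl⟩ := Finset.mem_image.1 hb
    rw [hmem a ha]
    exact (e1 ⟨a, ha⟩).2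
  · rw [Finset.card_image_of_injective _ π.injective, hcard]

lemma gN_eq_of_valid (w w' : GVert r β × Fin r) (hk : w.1.1 = w'.1.1)
    (hv : w.2 ∈ w.1.2.1.1) (hv' : w'.2 ∈ w'.1.2.1.1) : gN w = gN w' := by
  classical
  obtain ⟨⟨k, ⟨⟨s, hs⟩, j⟩⟩, i⟩ := w
  obtain ⟨⟨k', ⟨⟨s', hs'⟩, j'⟩⟩, i'⟩ := w'
  simp only at hk hv hv'
  subst hk
  obtain ⟨π, hπ1, hπ2⟩ := permExists s s' (hs.trans hs'.symm) i i' hv hv'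
  set τ : ∀ l : Fin r, Equiv.Perm (Fin (β ((l : ℕ) + 1))) :=
    fun l => if h : l = k then h ▸ Equiv.swap j j' else Equiv.refl _ with hτ
  have hτk : τ k j = j' := by
    simp only [hτ, dif_pos rfl]
    exact Equiv.swap_apply_left j j'
  have : gAct π τ (⟨⟨k, ⟨⟨s, hs⟩, j⟩⟩, i⟩ : GVert r β × Fin r) = ⟨⟨k, ⟨⟨s', hs'⟩, j'⟩⟩, i'⟩ := by
    simp only [gAct]
    exact Prod.ext (gvert_ext hπ2 hτk) hπ1
  rw [← this, gN_act]

lemma gN_zero (w : GVert r β × Fin r) (hv : w.2 ∉ w.1.2.1.1) : gN w = 0 := by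
  classical
  unfold gN
  rw [Finset.card_eq_zero, Finset.filter_eq_empty_iff]
  intro p _
  intro hp
  apply hv
  rw [← hp]
  exact p.1.1.2.2.2 p.2

lemma sum_gN (k : Fin r) :
    ∑ w ∈ Finset.univ.filter (fun w : GVert r β × Fin r => w.1.1 = k), gN w
      = Fintype.card (GEdge r β) := by
  classical
  rw [← Finset.card_univ]
  rw [Finset.card_eq_sum_card_fiberwise
    (f := fun e : GEdge r β => ((e.vert k, e.1.1.1) : GVert r β × Fin r))
    (t := Finset.univ.filter (fun w : GVert r β × Fin r => w.1.1 = k))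
    (fun e _ => by simp [GEdge.vert])]
  refine Finset.sum_congr rfl ?_
  intro w hw
  rw [Finset.mem_filter] at hw
  unfold gN
  refine Finset.card_bij' (fun p (_ : p ∈ Finset.univ.filter (fun p : GEdge r β × Fin r => gphi p = w)) => p.1)
    (fun e _ => ((e, k) : GEdge r β × Fin r)) ?_ ?_ ?_ ?_
  · intro p hp
    rw [Finset.mem_filter] at hp ⊢
    refine ⟨Finset.mem_univ _, ?_⟩
    have hp2 : p.2 = k := by
      have h3 : (gphi p).1.1 = p.2 := rfl
      rw [hp.2] at h3
      rw [← h3, hw.2]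
    show gphi (p.1, k) = w
    rw [← hp2, Prod.mk.eta]
    exact hp.2
  · intro e he
    rw [Finset.mem_filter] at he ⊢
    exact ⟨Finset.mem_univ _, he.2⟩
  · intro p hp
    rw [Finset.mem_filter] at hp
    have hp2 : p.2 = k := by
      have h3 : (gphi p).1.1 = p.2 := rfl
      rw [hp.2] at h3
      rw [← h3, hw.2]
    show (p.1, k) = p
    rw [← hp2]
  · intro e _; rfl

lemma card_vCount (k : Fin r) :
    (Finset.univ.filter
        (fun w : GVert r β × Fin r => w.1.1 = k ∧ w.2 ∈ w.1.2.1.1)).card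
      = ((k : ℕ) + 1) * (r.choose ((k : ℕ) + 1) * β ((k : ℕ) + 1)) := by
  classical
  rw [Finset.card_filter]
  rw [Fintype.sum_prod_type]
  have step1 : ∀ v : GVert r β,
      (∑ i : Fin r, if v.1 = k ∧ i ∈ v.2.1.1 then 1 else 0)
        = if v.1 = k then (k : ℕ) + 1 else 0 := by
    intro v
    by_cases h : v.1 = k
    · simp only [h, if_true, true_and]
      rw [Finset.sum_ite_mem, Finset.univ_inter, Finset.sum_const, smul_eq_mul, mul_one]
      rw [v.2.1.2, h]
    · simp [h]
  rw [Finset.sum_congr rfl (fun v _ => step1 v)]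
  rw [← Finset.univ_sigma_univ, Finset.sum_sigma]
  have step2 : ∀ k' : Fin r,
      (∑ p : {s : Finset (Fin r) // s.card = (k' : ℕ) + 1} × Fin (β ((k' : ℕ) + 1)),
        if (⟨k', p⟩ : GVert r β).1 = k then (k : ℕ) + 1 else 0)
      = if k' = k then (r.choose ((k : ℕ) + 1) * β ((k : ℕ) + 1)) * ((k : ℕ) + 1) else 0 := by
    intro k'
    by_cases h : k' = k
    · subst h
      simp only [if_pos rfl]
      rw [Finset.sum_const, smul_eq_mul]
      congr 1
      rw [Finset.card_univ, Fintype.card_prod, Fintype.card_fin]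
      congr 1
      rw [Fintype.card_subtype]
      rw [← Finset.powerset_univ, ← Finset.powersetCard_eq_filter, Finset.card_powersetCard,
        Finset.card_univ, Fintype.card_fin]
    · simp [h]
  rw [Finset.sum_congr rfl (fun k' _ => step2 k')]
  rw [Finset.sum_ite_eq' Finset.univ k]
  simp [mul_comm]

-- GChain material
def GChain (r : ℕ) : Type :=
  {c : Fin r × (Fin r → Finset (Fin r)) //
      (∀ k : Fin r, (c.2 k).card = (k : ℕ) + 1) ∧
      (∀ k l : Fin r, k ≤ l → c.2 k ⊆ c.2 l) ∧
      (∀ k : Fin r, c.1 ∈ c.2 k)}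

instance (r : ℕ) : Fintype (GChain r) := by unfold GChain; infer_instance


def chainToPerm {r : ℕ} [NeZero r] : Equiv.Perm (Fin r) → GChain r := fun σ =>
  ⟨(σ 0, fun k => (Finset.Iic k).image σ),
    fun k => by
      rw [Finset.card_image_of_injective _ σ.injective, Fin.card_Iic],
    fun k l hkl => Finset.image_subset_image (Finset.Iic_subset_Iic.2 hkl),
    fun k => Finset.mem_image_of_mem σ (Finset.mem_Iic.2 (Fin.zero_le k))⟩

theorem chainToPerm_inj {r : ℕ} [NeZero r] : Function.Injective (chainToPerm (r := r)) := by
  intro σ τ h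
  have h2 : ∀ k : Fin r, (Finset.Iic k).image σ = (Finset.Iic k).image τ :=
    fun k => congrFun (congrArg Prod.snd (congrArg Subtype.val h)) k
  have key : ∀ n : ℕ, ∀ k : Fin r, (k : ℕ) < n → σ k = τ k := by
    intro n
    induction n with
    | zero => omega
    | succ n ih =>
      intro k hk
      have : σ k ∈ (Finset.Iic k).image τ := by
        rw [← h2]; exact Finset.mem_image_of_mem σ (Finset.mem_Iic.2 le_rfl)
      obtain ⟨l, hl, hlk⟩ := Finset.mem_image.1 this
      rw [Finset.mem_Iic] at hl
      rcases eq_or_lt_of_le hl with h' | h'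
      · subst h'; exact hlk.symm
      · exfalso
        have : τ l = σ l := (ih l (by omega)).symm
        rw [this] at hlk
        exact absurd (σ.injective hlk) (by intro hh; rw [hh] at h'; exact lt_irrefl _ h')
  ext k
  exact congrArg Fin.val (key r k k.2)

theorem chainToPerm_surj {r : ℕ} [NeZero r] : Function.Surjective (chainToPerm (r := r)) := by
  intro c
  obtain ⟨⟨v0, f⟩, hcard', hmono', hmem'⟩ := c
  have hcard : ∀ k : Fin r, (f k).card = (k : ℕ) + 1 := hcard'
  have hmono : ∀ k l : Fin r, k ≤ l → f k ⊆ f l := hmono'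
  have hmem : ∀ k : Fin r, v0 ∈ f k := hmem'

  -- previous set
  set prev : Fin r → Finset (Fin r) := fun k =>
    if h : (k : ℕ) = 0 then ∅ else f ⟨(k : ℕ) - 1, by omega⟩ with hprev
  have hprevsub : ∀ k, prev k ⊆ f k := by
    intro k
    by_cases h : (k : ℕ) = 0
    · have hk : k = 0 := Fin.ext (by simpa using h)
      simp [hprev, hk]
    · simp only [hprev, dif_neg h]
      exact hmono _ _ (by rw [Fin.le_def]; exact Nat.sub_le _ _)
  have hprevcard : ∀ k : Fin r, (prev k).card = (k : ℕ) := by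
    intro k
    by_cases h : (k : ℕ) = 0
    · have hk : k = 0 := Fin.ext (by simpa using h)
      simp [hprev, hk]
    · simp only [hprev, dif_neg h, hcard]; omega
  have hne : ∀ k, (f k \ prev k).Nonempty := by
    intro k
    rw [← Finset.card_pos, Finset.card_sdiff_of_subset (hprevsub k), hcard, hprevcard]
    omega
  set g : Fin r → Fin r := fun k => (f k \ prev k).min' (hne k) with hg
  have hgmem : ∀ k, g k ∈ f k ∧ g k ∉ prev k := by
    intro k
    have := Finset.min'_mem _ (hne k)
    rw [Finset.mem_sdiff] at this
    exact this
  have hginj : Function.Injective g := by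
    have key : ∀ l k : Fin r, l < k → g l ≠ g k := by
      intro l k hlk heq
      have hk0 : (k : ℕ) ≠ 0 := by
        have := Fin.lt_def.1 hlk; omega
      have : g l ∈ prev k := by
        simp only [hprev, dif_neg hk0]
        exact hmono l ⟨(k : ℕ) - 1, by omega⟩ (by rw [Fin.le_def]; have := Fin.lt_def.1 hlk; simp only []; omega) (hgmem l).1
      rw [heq] at this
      exact (hgmem k).2 this
    intro a b hab
    rcases lt_trichotomy a b with h | h | h
    · exact absurd hab (key a b h)
    · exact h
    · exact absurd hab.symm (key b a h)
  have hgbij := (Finite.injective_iff_bijective).1 hginj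
  refine ⟨Equiv.ofBijective g hgbij, ?_⟩
  have happ : ∀ k, Equiv.ofBijective g hgbij k = g k := fun k => rfl
  have himg : ∀ k : Fin r, (Finset.Iic k).image g = f k := by
    intro k
    apply Finset.eq_of_subset_of_card_le
    · intro a ha
      obtain ⟨l, hl, rfl⟩ := Finset.mem_image.1 ha
      exact hmono l k (Finset.mem_Iic.1 hl) (hgmem l).1
    · rw [Finset.card_image_of_injective _ hginj, Fin.card_Iic, hcard]
  have hg0 : g 0 = v0 := by
    have h1 : f 0 = {v0} := by
      have := hcard 0
      simp only [Fin.val_zero, zero_add] at this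
      obtain ⟨a, ha⟩ := Finset.card_eq_one.1 this
      have h4 : v0 ∈ f 0 := hmem 0
      rw [ha, Finset.mem_singleton] at h4
      rw [ha, h4]
    have := (hgmem 0).1
    rw [h1, Finset.mem_singleton] at this
    exact this
  unfold chainToPerm
  apply Subtype.ext
  simp only [Prod.mk.injEq]
  constructor
  · rw [happ 0, hg0]
  · funext k
    rw [← himg k]
    apply Finset.image_congr
    intro a _
    exact happ a


theorem card_GChain {r : ℕ} [NeZero r] : Fintype.card (GChain r) = r.factorial := by
  rw [← Fintype.card_congr (Equiv.ofBijective _ ⟨chainToPerm_inj, chainToPerm_surj⟩),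
    Fintype.card_perm, Fintype.card_fin]

theorem card_GEdge [NeZero r] :
    Fintype.card (GEdge r β) = r.factorial * ∏ l : Fin r, β ((l : ℕ) + 1) := by
  rw [show Fintype.card (GEdge r β)
      = Fintype.card (GChain r × (∀ k : Fin r, Fin (β ((k : ℕ) + 1)))) from
    Fintype.card_congr (Equiv.refl _)]
  rw [Fintype.card_prod, card_GChain, Fintype.card_pi]
  simp

theorem gN_valid [NeZero r] (hβ : ∀ k, 1 ≤ k → k ≤ r → 1 ≤ β k) (w : GVert r β × Fin r)
    (hv : w.2 ∈ w.1.2.1.1) :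
    gN w = (w.1.1 : ℕ).factorial * (r - 1 - (w.1.1 : ℕ)).factorial *
      ∏ l ∈ Finset.univ.erase w.1.1, β ((l : ℕ) + 1) := by
  classical
  set k := w.1.1 with hk
  have hkr : (k : ℕ) + 1 ≤ r := k.2
  have hA : 0 < ((k : ℕ) + 1) * (r.choose ((k : ℕ) + 1) * β ((k : ℕ) + 1)) :=
    Nat.mul_pos (Nat.succ_pos _) (Nat.mul_pos (Nat.choose_pos hkr) (hβ _ (by omega) hkr))
  have harith : (k : ℕ).factorial * (r - 1 - (k : ℕ)).factorial *
      (∏ l ∈ Finset.univ.erase k, β ((l : ℕ) + 1)) *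
      (((k : ℕ) + 1) * (r.choose ((k : ℕ) + 1) * β ((k : ℕ) + 1)))
      = r.factorial * ∏ l : Fin r, β ((l : ℕ) + 1) := by
    have h1 := Nat.choose_mul_factorial_mul_factorial hkr
    have h2 : (∏ l ∈ Finset.univ.erase k, β ((l : ℕ) + 1)) * β ((k : ℕ) + 1)
        = ∏ l : Fin r, β ((l : ℕ) + 1) :=
      Finset.prod_erase_mul _ _ (Finset.mem_univ k)
    have h3 : ((k : ℕ) + 1).factorial = ((k : ℕ) + 1) * (k : ℕ).factorial :=
      Nat.factorial_succ _
    have h4 : r - 1 - (k : ℕ) = r - ((k : ℕ) + 1) := by omega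
    rw [← h2, ← h1, h3, h4]; ring
  have hsum : gN w * (((k : ℕ) + 1) * (r.choose ((k : ℕ) + 1) * β ((k : ℕ) + 1)))
      = r.factorial * ∏ l : Fin r, β ((l : ℕ) + 1) := by
    have e1 : ∑ w' ∈ Finset.univ.filter
          (fun w' : GVert r β × Fin r => w'.1.1 = k ∧ w'.2 ∈ w'.1.2.1.1), gN w'
        = ∑ w' ∈ Finset.univ.filter (fun w' : GVert r β × Fin r => w'.1.1 = k), gN w' := by
      apply Finset.sum_subset
      · intro w' hw'
        rw [Finset.mem_filter] at hw' ⊢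
        exact ⟨hw'.1, hw'.2.1⟩
      · intro w' hw' hw2
        rw [Finset.mem_filter] at hw' hw2
        push_neg at hw2
        exact gN_zero w' (hw2 hw'.1 hw'.2)
    have e2 : ∑ w' ∈ Finset.univ.filter
          (fun w' : GVert r β × Fin r => w'.1.1 = k ∧ w'.2 ∈ w'.1.2.1.1), gN w'
        = ∑ w' ∈ Finset.univ.filter
          (fun w' : GVert r β × Fin r => w'.1.1 = k ∧ w'.2 ∈ w'.1.2.1.1), gN w := by
      apply Finset.sum_congr rfl
      intro w' hw'
      rw [Finset.mem_filter] at hw'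
      exact gN_eq_of_valid w' w (hw'.2.1.trans hk) hw'.2.2 hv
    rw [Finset.sum_const] at e2
    rw [e2, card_vCount, smul_eq_mul] at e1
    rw [sum_gN, card_GEdge] at e1
    rw [mul_comm] at e1
    exact e1
  exact Nat.eq_of_mul_eq_mul_right hA (hsum.trans harith.symm)

lemma prod_Icc_beta : ∏ i ∈ Finset.Icc 1 r, (β i : ℝ) = ∏ l : Fin r, (β ((l : ℕ) + 1) : ℝ) := by
  rw [Fin.prod_univ_eq_prod_range (fun n => (β (n + 1) : ℝ)) r]
  rw [← Finset.Ico_add_one_right_eq_Icc, Finset.prod_Ico_eq_prod_range]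
  simp [add_comm]

lemma qexp_mul (hβ : ∀ k, 1 ≤ k → k ≤ r → 1 ≤ β k) (k : Fin r) :
    qexp r β ((k : ℕ) + 1) *
      ((k : ℕ).factorial * (r - 1 - (k : ℕ)).factorial *
        ∏ l ∈ Finset.univ.erase k, β ((l : ℕ) + 1) : ℕ) = 1 := by
  have hkr : (k : ℕ) + 1 ≤ r := k.2
  have hb : ∀ l : Fin r, (0 : ℝ) < (β ((l : ℕ) + 1) : ℝ) := by
    intro l
    exact_mod_cast hβ _ (by omega) l.2
  have hP : (0 : ℝ) < ∏ l : Fin r, (β ((l : ℕ) + 1) : ℝ) := Finset.prod_pos fun l _ => hb l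
  have hprod : (β ((k : ℕ) + 1) : ℝ) * ∏ l ∈ Finset.univ.erase k, (β ((l : ℕ) + 1) : ℝ)
      = ∏ l : Fin r, (β ((l : ℕ) + 1) : ℝ) := by
    rw [mul_comm]
    exact Finset.prod_erase_mul _ _ (Finset.mem_univ k)
  unfold qexp
  rw [prod_Icc_beta]
  have h1 : (k : ℕ) + 1 - 1 = (k : ℕ) := by omega
  have h2 : r - ((k : ℕ) + 1) = r - 1 - (k : ℕ) := by omega
  rw [h1, h2]
  push_cast
  have hK : (0 : ℝ) < ((k : ℕ).factorial : ℝ) := by exact_mod_cast Nat.factorial_pos _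
  have hL : (0 : ℝ) < ((r - 1 - (k : ℕ)).factorial : ℝ) := by exact_mod_cast Nat.factorial_pos _
  field_simp
  rw [← hprod]

lemma prod_edges (hβ : ∀ k, 1 ≤ k → k ≤ r → 1 ≤ β k) [NeZero r] (W : ℝ → ℝ → ℝ)
    (hW0 : ∀ a b, 0 ≤ W a b) (x : Fin r → ℝ) (z : GVert r β → ℝ) :
    ∏ e : GEdge r β, Walpha r β W (x e.1.1.1) (fun k => z (e.vert k))
      = ∏ v : GVert r β, ∏ i ∈ v.2.1.1, W (x i) (z v) := by
  classical
  have lhs1 : ∏ e : GEdge r β, Walpha r β W (x e.1.1.1) (fun k => z (e.vert k))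
      = ∏ p : GEdge r β × Fin r,
          W (x (gphi p).2) (z (gphi p).1) ^ qexp r β (((gphi p).1.1 : ℕ) + 1) := by
    rw [Fintype.prod_prod_type
      (f := fun p : GEdge r β × Fin r =>
        W (x (gphi p).2) (z (gphi p).1) ^ qexp r β (((gphi p).1.1 : ℕ) + 1))]
    apply Finset.prod_congr rfl
    intro e _
    unfold Walpha
    apply Finset.prod_congr rfl
    intro k _
    rfl
  rw [lhs1]
  rw [show (fun p : GEdge r β × Fin r =>
        W (x (gphi p).2) (z (gphi p).1) ^ qexp r β (((gphi p).1.1 : ℕ) + 1))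
      = (fun p : GEdge r β × Fin r =>
        (fun w : GVert r β × Fin r => W (x w.2) (z w.1) ^ qexp r β ((w.1.1 : ℕ) + 1)) (gphi p))
      from rfl]
  rw [← Finset.prod_fiberwise_of_maps_to' (g := gphi) (t := Finset.univ)
    (fun p _ => Finset.mem_univ _)
    (fun w : GVert r β × Fin r => W (x w.2) (z w.1) ^ qexp r β ((w.1.1 : ℕ) + 1))]
  have step : ∀ w : GVert r β × Fin r,
      (∏ _p ∈ Finset.univ.filter (fun p : GEdge r β × Fin r => gphi p = w),
          W (x w.2) (z w.1) ^ qexp r β ((w.1.1 : ℕ) + 1))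
        = if w.2 ∈ w.1.2.1.1 then W (x w.2) (z w.1) else 1 := by
    intro w
    rw [Finset.prod_const]
    rw [show (Finset.univ.filter (fun p : GEdge r β × Fin r => gphi p = w)).card
        = gN w from rfl]
    by_cases hv : w.2 ∈ w.1.2.1.1
    · rw [if_pos hv]
      rw [gN_valid hβ w hv]
      have ha : 0 ≤ W (x w.2) (z w.1) := hW0 _ _
      rw [← Real.rpow_natCast (W (x w.2) (z w.1) ^ qexp r β ((w.1.1 : ℕ) + 1)) _,
        ← Real.rpow_mul ha, qexp_mul hβ w.1.1, Real.rpow_one]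
    · rw [if_neg hv]
      rw [gN_zero w hv, pow_zero]
  calc ∏ w : GVert r β × Fin r,
        ∏ _p ∈ Finset.univ.filter (fun p : GEdge r β × Fin r => gphi p = w),
          W (x w.2) (z w.1) ^ qexp r β ((w.1.1 : ℕ) + 1)
      = ∏ w : GVert r β × Fin r, (if w.2 ∈ w.1.2.1.1 then W (x w.2) (z w.1) else 1) :=
        Finset.prod_congr rfl (fun w _ => step w)
    _ = ∏ v : GVert r β, ∏ i ∈ v.2.1.1, W (x i) (z v) := by
        rw [Fintype.prod_prod_type
          (f := fun w : GVert r β × Fin r => if w.2 ∈ w.1.2.1.1 then W (x w.2) (z w.1) else 1)]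
        apply Finset.prod_congr rfl
        intro v _
        exact Fintype.prod_ite_mem v.2.1.1 (fun i => W (x i) (z v))

open MeasureTheory in
lemma restrict_unitBox (ι : Type*) [Fintype ι] :
    (volume : Measure (ι → ℝ)).restrict (unitBox ι)
      = Measure.pi (fun _ : ι => volume.restrict (Set.Icc (0 : ℝ) 1)) := by
  refine (Measure.pi_eq fun s hs => ?_).symm
  rw [Measure.restrict_apply (MeasurableSet.univ_pi hs)]
  rw [show unitBox ι = Set.univ.pi fun _ => Set.Icc (0 : ℝ) 1 from rfl]
  rw [← Set.pi_inter_distrib]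
  rw [volume_pi_pi]
  exact Finset.prod_congr rfl fun i _ => (Measure.restrict_apply (hs i)).symm

open MeasureTheory in
lemma box_integral_prod {ι : Type*} [Fintype ι] (g : ι → ℝ → ℝ) :
    ∫ z in unitBox ι, ∏ v, g v (z v) = ∏ v, ∫ y in Set.Icc (0 : ℝ) 1, g v y := by
  rw [show (∫ z in unitBox ι, ∏ v, g v (z v))
      = ∫ z, (∏ v, g v (z v)) ∂((volume : Measure (ι → ℝ)).restrict (unitBox ι)) from rfl]
  rw [restrict_unitBox]
  exact MeasureTheory.integral_fintype_prod_eq_prod (E := fun _ => ℝ) g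
    (μ := fun _ => volume.restrict (Set.Icc (0 : ℝ) 1))

lemma prod_gvert_rho [NeZero r] (W : ℝ → ℝ → ℝ) (x : Fin r → ℝ) :
    ∏ v : GVert r β, rho W x v.2.1.1
      = ∏ F ∈ Finset.univ.filter
          (fun F : Finset (Fin r) => 1 ≤ F.card ∧ F.card ≤ r),
        rho W x F ^ β F.card := by
  classical
  have hr : 0 < r := Nat.pos_of_ne_zero (NeZero.ne r)
  have hcard : ∀ F : Finset (Fin r), F.card ≤ r := by
    intro F
    have := Finset.card_le_univ F
    simpa using this
  set g : Finset (Fin r) → Fin r := fun F => ⟨F.card - 1, by have := hcard F; omega⟩ with hg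
  rw [← Finset.prod_fiberwise_of_maps_to (g := g)
    (t := (Finset.univ : Finset (Fin r))) (fun F _ => Finset.mem_univ _)
    (fun F => rho W x F ^ β F.card)]
  rw [← Finset.univ_sigma_univ, Finset.prod_sigma]
  apply Finset.prod_congr rfl
  intro k _
  have hsets : (Finset.univ.filter
        (fun F : Finset (Fin r) => 1 ≤ F.card ∧ F.card ≤ r)).filter (fun F => g F = k)
      = Finset.univ.filter (fun F : Finset (Fin r) => F.card = (k : ℕ) + 1) := by
    ext F
    simp only [Finset.mem_filter, Finset.mem_univ, true_and, hg, Fin.ext_iff]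
    have hk := k.2
    have hF := hcard F
    constructor
    · rintro ⟨⟨h1, _⟩, h2⟩
      omega
    · intro h
      refine ⟨⟨by omega, by omega⟩, by omega⟩
  rw [hsets]
  rw [show (∏ p : {s : Finset (Fin r) // s.card = (k : ℕ) + 1} × Fin (β ((k : ℕ) + 1)),
        rho W x ((⟨k, p⟩ : GVert r β).2.1.1))
      = ∏ p : {s : Finset (Fin r) // s.card = (k : ℕ) + 1} × Fin (β ((k : ℕ) + 1)),
        rho W x (p.1 : Finset (Fin r)) from rfl]
  rw [Fintype.prod_prod_type
    (f := fun p : {s : Finset (Fin r) // s.card = (k : ℕ) + 1} × Fin (β ((k : ℕ) + 1)) =>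
      rho W x (p.1 : Finset (Fin r)))]
  rw [Finset.prod_subtype (p := fun F : Finset (Fin r) => F.card = (k : ℕ) + 1)
    (Finset.univ.filter (fun F : Finset (Fin r) => F.card = (k : ℕ) + 1))
    (fun F => by simp) (fun F => rho W x F ^ β F.card)]
  apply Finset.prod_congr rfl
  intro s _
  show (∏ _y : Fin (β ((k : ℕ) + 1)), rho W x (s : Finset (Fin r)))
      = rho W x (s : Finset (Fin r)) ^ β ((s : Finset (Fin r))).card
  rw [Finset.prod_const, Finset.card_univ, Fintype.card_fin, s.2]

end AuxProof

/-- `t_{𝓖_α}(W_α) = t_J^β(W)` for every graphon `W`, where `J` is the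
`(r,r)`-downset graph; here `α = (α_k)_{k=1}^r` is a symmetric integer weight vector
with `C(m-k,r-k) ∣ α_k` and `β_k = α_k / C(m-k,r-k) ≥ 1` for each `1 ≤ k ≤ r`. -/
theorem subgraph_density_eq_downset (m r : ℕ) (hr : 1 ≤ r) (hrm : r ≤ m)
    (α β : ℕ → ℕ) (hβ : ∀ k, 1 ≤ k → k ≤ r → 1 ≤ β k)
    (hαβ : ∀ k, 1 ≤ k → k ≤ r → α k = β k * (m - k).choose (r - k))
    (W : ℝ → ℝ → ℝ) (hWmeas : Measurable (Function.uncurry W))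
    (hWsymm : ∀ x y, W x y = W y x) (hWmem : ∀ x y, W x y ∈ Set.Icc (0 : ℝ) 1) :
    tGyp r β (Walpha r β W) = downsetDensity r r β W := by
  haveI : NeZero r := ⟨by omega⟩
  have hW0 : ∀ a b, 0 ≤ W a b := fun a b => (hWmem a b).1
  unfold tGyp downsetDensity
  apply MeasureTheory.integral_congr_ae
  refine Filter.Eventually.of_forall fun x => ?_
  calc (∫ z in unitBox (GVert r β),
        ∏ e : GEdge r β, Walpha r β W (x e.1.1.1) fun k => z (e.vert k))
      = ∫ z in unitBox (GVert r β), ∏ v : GVert r β, ∏ i ∈ v.2.1.1, W (x i) (z v) := by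
        apply MeasureTheory.integral_congr_ae
        exact Filter.Eventually.of_forall fun z => prod_edges hβ W hW0 x z
    _ = ∏ v : GVert r β, ∫ y in Set.Icc (0 : ℝ) 1, ∏ i ∈ v.2.1.1, W (x i) y :=
        box_integral_prod (fun (v : GVert r β) (y : ℝ) => ∏ i ∈ v.2.1.1, W (x i) y)
    _ = ∏ v : GVert r β, rho W x v.2.1.1 := rfl
    _ = _ := prod_gvert_rho W x
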